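/- arXiv:1601.05479 — 2 statements merged into one kernel-verified Lean document; each statement's English description precedes it below -/
import Mathlib

section
/- Let 0 ≤ i₁ < i₂ < i₃ < i₄ be natural numbers and J = {i₁,i₂,i₃,i₄}. Then D_J is not the zero polynomial; its degree as a polynomial in x equals i₃ + i₄, and its order of vanishing at the origin (the smallest exponent with nonzero coefficient) equals i₁ + i₂. -/
open Polynomial

/-- The 4×4 matrix `𝐌_J(x)` for `J = {a,b,c,d}` (columns in the given order),
whose column for exponent `i` is `(1, i, x^i, i·x^i)ᵀ`, and its determinant `D_J`. -/
noncomputable def Dfour (a b c d : ℕ) : Polynomial ℤ :=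
  (Matrix.of fun r (j : Fin 4) =>
    ![(1 : Polynomial ℤ), ((![a,b,c,d] j : ℕ) : Polynomial ℤ),
      X ^ (![a,b,c,d] j), ((![a,b,c,d] j : ℕ) : Polynomial ℤ) * X ^ (![a,b,c,d] j)] r).det

/-- Explicit expansion of `D_J`. -/
lemma Dfour_eq (a b c d : ℕ) : Dfour a b c d =
    C (((b:ℤ)-a)*((d:ℤ)-c)) * (X^(c+d) + X^(a+b))
  - C (((c:ℤ)-a)*((d:ℤ)-b)) * (X^(b+d) + X^(a+c))
  + C (((d:ℤ)-a)*((c:ℤ)-b)) * (X^(b+c) + X^(a+d)) := by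
  unfold Dfour
  simp [Matrix.det_succ_row_zero, Fin.sum_univ_succ, Fin.succAbove, Fin.castSucc,
    Fin.castAdd, Fin.castLE]
  ring

/-- for `i₁ < i₂ < i₃ < i₄`, the polynomial `D_J` is nonzero, has degree
`i₃ + i₄`, and its order of vanishing at the origin is `i₁ + i₂`. -/
theorem Dfour_ne_zero_degree_order (i₁ i₂ i₃ i₄ : ℕ)
    (h₁₂ : i₁ < i₂) (h₂₃ : i₂ < i₃) (h₃₄ : i₃ < i₄) :
    Dfour i₁ i₂ i₃ i₄ ≠ 0 ∧
    (Dfour i₁ i₂ i₃ i₄).natDegree = i₃ + i₄ ∧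
    (Dfour i₁ i₂ i₃ i₄).natTrailingDegree = i₁ + i₂ := by
  set D := Dfour i₁ i₂ i₃ i₄ with hDdef
  have hco : ∀ n, D.coeff n =
      ((i₂:ℤ)-i₁)*((i₄:ℤ)-i₃) * ((if n = i₃+i₄ then 1 else 0) + (if n = i₁+i₂ then 1 else 0))
    - ((i₃:ℤ)-i₁)*((i₄:ℤ)-i₂) * ((if n = i₂+i₄ then 1 else 0) + (if n = i₁+i₃ then 1 else 0))
    + ((i₄:ℤ)-i₁)*((i₃:ℤ)-i₂) * ((if n = i₂+i₃ then 1 else 0) + (if n = i₁+i₄ then 1 else 0)) := by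
    intro n
    rw [hDdef, Dfour_eq]
    simp only [coeff_add, coeff_sub, coeff_C_mul, coeff_X_pow, mul_add]
  have hprod : ((i₂:ℤ)-i₁)*((i₄:ℤ)-i₃) ≠ 0 :=
    mul_ne_zero (sub_ne_zero_of_ne (by exact_mod_cast h₁₂.ne'))
      (sub_ne_zero_of_ne (by exact_mod_cast h₃₄.ne'))
  have htop : D.coeff (i₃+i₄) ≠ 0 := by
    rw [hco]
    rw [if_pos rfl, if_neg (by omega), if_neg (by omega), if_neg (by omega),
      if_neg (by omega), if_neg (by omega)]
    simpa using hprod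
  have hbot : D.coeff (i₁+i₂) ≠ 0 := by
    rw [hco]
    rw [if_neg (by omega), if_pos rfl, if_neg (by omega), if_neg (by omega),
      if_neg (by omega), if_neg (by omega)]
    simpa using hprod
  have hD0 : D ≠ 0 := fun h => htop (by simp [h])
  refine ⟨hD0, ?_, ?_⟩
  · refine le_antisymm ?_ (le_natDegree_of_ne_zero htop)
    rw [natDegree_le_iff_coeff_eq_zero]
    intro m hm
    rw [hco, if_neg (by omega), if_neg (by omega), if_neg (by omega), if_neg (by omega),
      if_neg (by omega), if_neg (by omega)]
    ring
  · refine le_antisymm (natTrailingDegree_le_of_ne_zero hbot) ?_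
    apply le_natTrailingDegree hD0
    intro m hm
    rw [hco, if_neg (by omega), if_neg (by omega), if_neg (by omega), if_neg (by omega),
      if_neg (by omega), if_neg (by omega)]
    ring
end

section
/- Let K be an algebraically closed field of characteristic zero, let 0 ≤ i₁ < i₂ < i₃ < i₄ be natural numbers, J = {i₁,i₂,i₃,i₄}, and let β ∈ K with β ≠ 0 be a root of D_J (viewed in K[x]) of multiplicity at least 3. Then β^{i₁} = β^{i₂} = β^{i₃} = β^{i₄}; in particular β^{i₂−i₁} = 1, so β is a root of unity. -/
open Polynomial

private lemma Dfour_formula (a b c d : ℕ) :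
    Dfour a b c d =
      ((b : Polynomial ℤ) - (a : Polynomial ℤ)) * ((d : Polynomial ℤ) - (c : Polynomial ℤ)) *
        (X ^ (a + b) + X ^ (c + d))
      - ((c : Polynomial ℤ) - (a : Polynomial ℤ)) * ((d : Polynomial ℤ) - (b : Polynomial ℤ)) *
        (X ^ (a + c) + X ^ (b + d))
      + ((d : Polynomial ℤ) - (a : Polynomial ℤ)) * ((c : Polynomial ℤ) - (b : Polynomial ℤ)) *
        (X ^ (a + d) + X ^ (b + c)) := by
  unfold Dfour
  simp [Matrix.det_succ_row_zero, Fin.sum_univ_succ, Fin.succAbove, Fin.castSucc,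
    Fin.castAdd, Fin.castLE]
  ring

/-- if `β ≠ 0` is a root of `D_J` (viewed in `K[x]`) of multiplicity at
least 3, then `β^{i₁} = β^{i₂} = β^{i₃} = β^{i₄}`; in particular `β^{i₂−i₁} = 1`,
so `β` is a root of unity. -/
theorem Dfour_triple_root (K : Type*) [Field K] [IsAlgClosed K] [CharZero K]
    (i₁ i₂ i₃ i₄ : ℕ) (h₁₂ : i₁ < i₂) (h₂₃ : i₂ < i₃) (h₃₄ : i₃ < i₄)
    (β : K) (hβ : β ≠ 0)
    (hmult : 3 ≤ ((Dfour i₁ i₂ i₃ i₄).map (Int.castRingHom K)).rootMultiplicity β) :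
    β ^ i₁ = β ^ i₂ ∧ β ^ i₂ = β ^ i₃ ∧ β ^ i₃ = β ^ i₄ ∧ β ^ (i₂ - i₁) = 1 := by
  obtain ⟨a, ha0, rfl⟩ : ∃ a, 0 < a ∧ i₂ = i₁ + a := ⟨i₂ - i₁, by omega, by omega⟩
  obtain ⟨b, hb0, rfl⟩ : ∃ b, 0 < b ∧ i₃ = i₁ + a + b := ⟨i₃ - (i₁ + a), by omega, by omega⟩
  obtain ⟨c, hc0, rfl⟩ : ∃ c, 0 < c ∧ i₄ = i₁ + a + b + c :=
    ⟨i₄ - (i₁ + a + b), by omega, by omega⟩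
  set P : K[X] := (Dfour i₁ (i₁+a) (i₁+a+b) (i₁+a+b+c)).map (Int.castRingHom K) with hPdef
  have hmap : P = ((a*c : ℕ) : K[X]) * (X ^ (2*i₁+a) + X ^ (2*i₁+2*a+2*b+c))
      - (((a+b)*(b+c) : ℕ) : K[X]) * (X ^ (2*i₁+a+b) + X ^ (2*i₁+2*a+b+c))
      + ((b*(a+b+c) : ℕ) : K[X]) * (X ^ (2*i₁+2*a+b) + X ^ (2*i₁+a+b+c)) := by
    rw [hPdef, Dfour_formula]
    simp only [Polynomial.map_add, Polynomial.map_sub, Polynomial.map_mul, Polynomial.map_pow,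
      Polynomial.map_X, Polynomial.map_natCast]
    push_cast
    ring
  have hdvd : (X - C β) ^ 3 ∣ P :=
    (pow_dvd_pow _ hmult).trans (P.pow_rootMultiplicity_dvd β)
  obtain ⟨R, hR⟩ := hdvd
  have hE : ((a*c : ℕ) : K[X]) * (X ^ (2*i₁+a+1+1) + X ^ (2*i₁+2*a+2*b+c+1+1))
      - (((a+b)*(b+c) : ℕ) : K[X]) * (X ^ (2*i₁+a+b+1+1) + X ^ (2*i₁+2*a+b+c+1+1))
      + ((b*(a+b+c) : ℕ) : K[X]) * (X ^ (2*i₁+2*a+b+1+1) + X ^ (2*i₁+a+b+c+1+1))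
      = (X - C β) ^ 3 * (X ^ 2 * R) := by
    rw [show (X - C β) ^ 3 * (X ^ 2 * R) = X ^ 2 * ((X - C β) ^ 3 * R) from by ring, ← hR, hmap]
    ring
  have h0 := congrArg (eval β) hE
  have h1 := congrArg (eval β) (congrArg derivative hE)
  have h2 := congrArg (eval β) (congrArg derivative (congrArg derivative hE))
  simp [derivative_add, derivative_sub, derivative_natCast_mul, derivative_C_mul,
    derivative_X_pow, derivative_mul, derivative_pow, derivative_X, derivative_C,
    Nat.add_sub_cancel, eval_add, eval_sub, eval_mul, eval_pow, eval_natCast, eval_C,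
    eval_X, sub_self] at h0 h1 h2
  have E0 : (a:K)*c*(1 + β^a*β^b*β^b*β^c) - ((a:K)+b)*((b:K)+c)*(β^b + β^a*β^b*β^c)
      + (b:K)*((a:K)+b+c)*(β^a*β^b + β^b*β^c) = 0 := by
    apply mul_left_cancel₀ (pow_ne_zero (2*i₁+a+2) hβ)
    rw [mul_zero]
    linear_combination h0
  have E1 : (a:K)*c*(((a:K)+2*b+c)*(β^a*β^b*β^b*β^c) - ((a:K)+2*b+c))
      - ((a:K)+b)*((b:K)+c)*(((a:K)+c)*(β^a*β^b*β^c) - ((a:K)+c)*β^b)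
      + (b:K)*((a:K)+b+c)*(((a:K)-c)*(β^a*β^b) - ((a:K)-c)*(β^b*β^c)) = 0 := by
    apply mul_left_cancel₀ (pow_ne_zero (2*i₁+a+2) hβ)
    rw [mul_zero]
    linear_combination (2*β)*h1 - (4*(i₁:K)+3*a+2*b+c+4)*h0
  have E2 : (a:K)*c*(((a:K)+2*b+c)^2*(1 + β^a*β^b*β^b*β^c))
      - ((a:K)+b)*((b:K)+c)*(((a:K)+c)^2*(β^b + β^a*β^b*β^c))
      + (b:K)*((a:K)+b+c)*(((a:K)-c)^2*(β^a*β^b + β^b*β^c)) = 0 := by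
    apply mul_left_cancel₀ (pow_ne_zero (2*i₁+a+2) hβ)
    rw [mul_zero]
    linear_combination (4*β^2)*h2 + (4 - 4*(4*(i₁:K)+3*a+2*b+c+4))*β*h1
      + (4*(i₁:K)+3*a+2*b+c+4)^2*h0
  have haK : (a:K) ≠ 0 := Nat.cast_ne_zero.mpr ha0.ne'
  have hbK : (b:K) ≠ 0 := Nat.cast_ne_zero.mpr hb0.ne'
  have hcK : (c:K) ≠ 0 := Nat.cast_ne_zero.mpr hc0.ne'
  have habK : ((a:K)+b) ≠ 0 := by
    have : ((a+b : ℕ) : K) ≠ 0 := Nat.cast_ne_zero.mpr (by omega)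
    push_cast at this; exact this
  have hbcK : ((b:K)+c) ≠ 0 := by
    have : ((b+c : ℕ) : K) ≠ 0 := Nat.cast_ne_zero.mpr (by omega)
    push_cast at this; exact this
  have habcK : ((a:K)+b+c) ≠ 0 := by
    have : ((a+b+c : ℕ) : K) ≠ 0 := Nat.cast_ne_zero.mpr (by omega)
    push_cast at this; exact this
  have key1 : (β^b - 1) * (β^a*β^b*β^c - 1) = 0 := by
    apply mul_left_cancel₀ (show (4*((a:K)*c)*(((a:K)+b)*((b:K)+c))) ≠ 0 from
      mul_ne_zero (mul_ne_zero (by norm_num) (mul_ne_zero haK hcK)) (mul_ne_zero habK hbcK))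
    rw [mul_zero]
    linear_combination E2 - ((a:K)-c)^2 * E0
  have key2 : (β^a*β^b - 1) * (β^b*β^c - 1) = 0 := by
    apply mul_left_cancel₀ (show (4*((a:K)*c)*((b:K)*((a:K)+b+c))) ≠ 0 from
      mul_ne_zero (mul_ne_zero (by norm_num) (mul_ne_zero haK hcK)) (mul_ne_zero hbK habcK))
    rw [mul_zero]
    linear_combination E2 - ((a:K)+c)^2 * E0
  obtain ⟨ha1, hb1, hc1⟩ : β^a = 1 ∧ β^b = 1 ∧ β^c = 1 := by
    rcases mul_eq_zero.mp key1 with h1 | h1 <;> rcases mul_eq_zero.mp key2 with h2 | h2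
    · -- β^b = 1, β^a*β^b = 1
      have hb1 : β^b = 1 := by linear_combination h1
      have ha1 : β^a = 1 := by linear_combination h2 - β^a * h1
      refine ⟨ha1, hb1, ?_⟩
      rw [ha1, hb1] at E1
      have hne : (2*(a:K)*b*((a:K)+b)) ≠ 0 :=
        mul_ne_zero (mul_ne_zero (mul_ne_zero (by norm_num) haK) hbK) habK
      have hfin : (2*(a:K)*b*((a:K)+b)) * (β^c - 1) = (2*(a:K)*b*((a:K)+b)) * 0 := by
        rw [mul_zero]; linear_combination -E1
      have := mul_left_cancel₀ hne hfin
      exact sub_eq_zero.mp this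
    · -- β^b = 1, β^b*β^c = 1
      have hb1 : β^b = 1 := by linear_combination h1
      have hc1 : β^c = 1 := by linear_combination h2 - β^c * h1
      refine ⟨?_, hb1, hc1⟩
      rw [hb1, hc1] at E1
      have hne : (2*(b:K)*c*((b:K)+c)) ≠ 0 :=
        mul_ne_zero (mul_ne_zero (mul_ne_zero (by norm_num) hbK) hcK) hbcK
      have hfin : (2*(b:K)*c*((b:K)+c)) * (β^a - 1) = (2*(b:K)*c*((b:K)+c)) * 0 := by
        rw [mul_zero]; linear_combination -E1
      have := mul_left_cancel₀ hne hfin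
      exact sub_eq_zero.mp this
    · -- β^a*β^b*β^c = 1, β^a*β^b = 1
      have hc1 : β^c = 1 := by linear_combination h1 - β^c * h2
      rw [hc1] at E1
      have hne : (2*(c:K)*((a:K)+b)*((a:K)+b+c)) ≠ 0 :=
        mul_ne_zero (mul_ne_zero (mul_ne_zero (by norm_num) hcK) habK) habcK
      have hfin : (2*(c:K)*((a:K)+b)*((a:K)+b+c)) * (β^b - 1)
          = (2*(c:K)*((a:K)+b)*((a:K)+b+c)) * 0 := by
        rw [mul_zero]
        linear_combination E1 + (-((a:K)*c)*((a:K)+2*b+c)*β^b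
          + ((a:K)+b)*((b:K)+c)*((a:K)+c) - (b:K)*((a:K)+b+c)*((a:K)-c)) * h2
      have hb1 : β^b = 1 := sub_eq_zero.mp (mul_left_cancel₀ hne hfin)
      have ha1 : β^a = 1 := by linear_combination h2 - β^a * hb1
      exact ⟨ha1, hb1, hc1⟩
    · -- β^a*β^b*β^c = 1, β^b*β^c = 1
      have ha1 : β^a = 1 := by linear_combination h1 - β^a * h2
      rw [ha1] at E1
      have hne : (2*(a:K)*((b:K)+c)*((a:K)+b+c)) ≠ 0 :=
        mul_ne_zero (mul_ne_zero (mul_ne_zero (by norm_num) haK) hbcK) habcK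
      have hfin : (2*(a:K)*((b:K)+c)*((a:K)+b+c)) * (β^b - 1)
          = (2*(a:K)*((b:K)+c)*((a:K)+b+c)) * 0 := by
        rw [mul_zero]
        linear_combination E1 + (-((a:K)*c)*((a:K)+2*b+c)*β^b
          + ((a:K)+b)*((b:K)+c)*((a:K)+c) + (b:K)*((a:K)+b+c)*((a:K)-c)) * h2
      have hb1 : β^b = 1 := sub_eq_zero.mp (mul_left_cancel₀ hne hfin)
      have hc1 : β^c = 1 := by linear_combination h2 - β^c * hb1
      exact ⟨ha1, hb1, hc1⟩
  refine ⟨?_, ?_, ?_, ?_⟩ <;> simp [pow_add, ha1, hb1, hc1, Nat.add_sub_cancel_left]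
end
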